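/- A word w with |w| ≥ 3 is a factor of the Thue–Morse word t if and only if w is a factor of μⁿ(a), where n = 2 + ⌈log₂(|w|−1)⌉. -/

import Mathlib

/-- Alphabet: `false` = a, `true` = b. The Thue–Morse morphism μ(a)=ab, μ(b)=ba. -/
def mu (w : List Bool) : List Bool := w.flatMap (fun x => [x, !x])

/-- The Thue–Morse word: `tm n` is the parity of the binary digit sum of `n`. -/
def tm (n : ℕ) : Bool := (Nat.digits 2 n).sum % 2 == 1

/-- `w` is a (finite) factor/segment of the Thue–Morse word. -/
def IsFactorTM (w : List Bool) : Prop :=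
  ∃ i : ℕ, w = (List.range w.length).map (fun k => tm (i + k))

/-- Apply the endomorphism of {a,b}⁺ determined by a ↦ fa, b ↦ fb to a word. -/
def subst (fa fb : List Bool) (w : List Bool) : List Bool :=
  w.flatMap (fun x => if x then fb else fa)

/-- Segment of the Thue–Morse word starting at `i`, of length `n`. -/
def seg (i n : ℕ) : List Bool := (List.range n).map (fun k => tm (i + k))

lemma tm_two_mul (n : ℕ) : tm (2 * n) = tm n := by
  rcases Nat.eq_zero_or_pos n with h | h
  · subst h; rfl
  · unfold tm
    rw [Nat.digits_def' (by norm_num : (1:ℕ) < 2) (by omega)]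
    simp [Nat.mul_div_cancel_left _ (by norm_num : (0:ℕ) < 2)]

lemma tm_two_mul_add_one (n : ℕ) : tm (2 * n + 1) = !tm n := by
  unfold tm
  rw [Nat.digits_def' (by norm_num : (1:ℕ) < 2) (by omega)]
  have h1 : (2 * n + 1) % 2 = 1 := by omega
  have h2 : (2 * n + 1) / 2 = n := by omega
  rw [h1, h2]
  rcases Nat.mod_two_eq_zero_or_one (Nat.digits 2 n).sum with h | h <;>
    simp [List.sum_cons, Nat.add_mod, h]

lemma seg_length (i n : ℕ) : (seg i n).length = n := by simp [seg]

lemma seg_add (i a b : ℕ) : seg i (a + b) = seg i a ++ seg (i + a) b := by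
  simp only [seg, List.range_add, List.map_append, List.map_map]
  congr 1
  apply List.map_congr_left
  intro k _
  simp only [Function.comp]
  congr 1
  omega

lemma seg_one (i : ℕ) : seg i 1 = [tm i] := by simp [seg, List.range_succ]

lemma mu_append (x y : List Bool) : mu (x ++ y) = mu x ++ mu y := by
  simp [mu]

lemma mu_seg (i n : ℕ) : mu (seg i n) = seg (2 * i) (2 * n) := by
  induction n with
  | zero => rfl
  | succ n ih =>
    rw [seg_add, mu_append, ih, seg_one]
    have : 2 * (n + 1) = 2 * n + 2 := by ring
    rw [this, seg_add]
    congr 1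
    have e1 : 2 * i + 2 * n = 2 * (i + n) := by ring
    rw [e1]
    have : seg (2 * (i + n)) 2 = [tm (2 * (i + n)), tm (2 * (i + n) + 1)] := by
      simp [seg, List.range_succ]
    rw [this, tm_two_mul, tm_two_mul_add_one]
    simp [mu]

lemma mu_iter_seg (k i n : ℕ) : mu^[k] (seg i n) = seg (2 ^ k * i) (2 ^ k * n) := by
  induction k with
  | zero => simp
  | succ k ih =>
    rw [Function.iterate_succ_apply', ih, mu_seg]
    congr 1 <;> ring

lemma mu_iter_false (n : ℕ) : mu^[n] [false] = seg 0 (2 ^ n) := by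
  have h : seg 0 1 = [false] := by
    have : tm 0 = false := by simp [tm]
    simp [seg_one, this]
  rw [← h, mu_iter_seg]
  congr 1 <;> simp

lemma mu_infix {u v : List Bool} (h : u <:+: v) : mu u <:+: mu v := by
  obtain ⟨s, t, rfl⟩ := h
  exact ⟨mu s, mu t, by simp [mu_append]⟩

lemma mu_iter_infix (n : ℕ) {u v : List Bool} (h : u <:+: v) : mu^[n] u <:+: mu^[n] v := by
  induction n with
  | zero => simpa
  | succ n ih => simp only [Function.iterate_succ_apply']; exact mu_infix ih

lemma seg_infix {a i l n : ℕ} (h1 : a ≤ i) (h2 : i + l ≤ a + n) :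
    seg i l <:+: seg a n := by
  refine ⟨seg a (i - a), seg (i + l) (a + n - (i + l)), ?_⟩
  have e1 : n = (i - a) + (l + (a + n - (i + l))) := by omega
  conv_rhs => rw [e1]
  rw [seg_add, seg_add]
  have e2 : a + (i - a) = i := by omega
  rw [e2]
  simp [List.append_assoc]

lemma tm_not_const (Q : ℕ) : tm Q ≠ tm (Q + 1) ∨ tm (Q + 1) ≠ tm (Q + 2) := by
  rcases Nat.even_or_odd Q with ⟨n, hn⟩ | ⟨n, hn⟩
  · left
    have h : Q = 2 * n := by omega
    rw [h, tm_two_mul, show 2 * n + 1 = 2 * n + 1 from rfl, tm_two_mul_add_one]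
    cases tm n <;> simp
  · right
    have h1 : Q + 1 = 2 * (n + 1) := by omega
    have h2 : Q + 2 = 2 * (n + 1) + 1 := by omega
    rw [h1, h2, tm_two_mul, tm_two_mul_add_one]
    cases tm (n + 1) <;> simp

lemma seg_three (Q : ℕ) : seg Q 3 = [tm Q, tm (Q + 1), tm (Q + 2)] := by
  simp [seg, List.range_succ]

lemma seg_three_infix (Q : ℕ) : seg Q 3 <:+: mu^[3] [false] := by
  have h8 : mu^[3] [false] = [false, true, true, false, true, false, false, true] := by decide
  have hnc := tm_not_const Q
  rw [seg_three, h8]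
  cases h0 : tm Q <;> cases h1 : tm (Q + 1) <;> cases h2 : tm (Q + 2) <;>
    simp_all <;> decide

/-- A word of length ≥ 3 is a factor of t iff it is a factor of μⁿ(a) with
    n = 2 + ⌈log₂(|w|−1)⌉. -/
theorem factor_iff_factor_mu_pow (w : List Bool) (hw : 3 ≤ w.length) :
    IsFactorTM w ↔ w <:+: mu^[2 + Nat.clog 2 (w.length - 1)] [false] := by
  set k := Nat.clog 2 (w.length - 1) with hk
  constructor
  · rintro ⟨i, hi⟩
    have hk1 : 1 ≤ k := Nat.clog_pos (by norm_num) (by omega)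
    have hle : w.length - 1 ≤ 2 ^ k := Nat.le_pow_clog (by norm_num) _
    set m := 2 ^ (k - 1) with hmdef
    have hm : 0 < m := Nat.pow_pos (by norm_num)
    have h2m : 2 ^ k = 2 * m := by
      rw [hmdef, ← pow_succ']
      congr 1
      omega
    have hlen : w.length ≤ 2 * m + 1 := by omega
    set Q := i / m with hQ
    have hQR : m * Q + i % m = i := Nat.div_add_mod i m
    have hR : i % m < m := Nat.mod_lt _ hm
    have h1 : w <:+: seg (m * Q) (m * 3) := by
      rw [hi]
      exact seg_infix (a := m * Q) (l := w.length) (by omega) (by omega)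
    have h2 : seg (m * Q) (m * 3) = mu^[k - 1] (seg Q 3) := by
      rw [mu_iter_seg, ← hmdef]
    have h3 : w <:+: mu^[k - 1] (mu^[3] [false]) :=
      (h2 ▸ h1).trans (mu_iter_infix (k - 1) (seg_three_infix Q))
    rw [← Function.iterate_add_apply] at h3
    have he : k - 1 + 3 = 2 + k := by omega
    rwa [he] at h3
  · intro h
    rw [mu_iter_false] at h
    obtain ⟨s, t, hst⟩ := h
    refine ⟨s.length, ?_⟩
    have hN : 2 ^ (2 + k) = s.length + (w.length + t.length) := by
      have := congrArg List.length hst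
      simp [seg_length] at this
      omega
    rw [hN, seg_add, seg_add, List.append_assoc] at hst
    have h1 := List.append_inj hst (by simp [seg_length])
    have h2 := List.append_inj h1.2 (by simp [seg_length])
    have h3 : w = seg (0 + s.length) w.length := h2.1
    simpa [seg] using h3
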